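/- A proper submodule N of M is a weakly classical 1-absorbing prime submodule if and only if for all proper ideals I, J, K of R and every m ∈ M, if IJKm ⊆ N and IJKm ≠ 0, then IJm ⊆ N or Km ⊆ N. -/
import Mathlib


/-- A proper submodule `N` of `M` is weakly classical 1-absorbing prime if whenever
`abcm ∈ N` and `abcm ≠ 0` for nonunits `a, b, c ∈ R` and `m ∈ M`, then `abm ∈ N` or `cm ∈ N`. -/
def IsWeaklyClassical1AbsorbingPrime {R : Type*} [CommRing R] {M : Type*} [AddCommGroup M]
    [Module R M] (N : Submodule R M) : Prop :=
  N ≠ ⊤ ∧ ∀ a b c : R, ∀ m : M, ¬ IsUnit a → ¬ IsUnit b → ¬ IsUnit c →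
    (a * b * c) • m ∈ N → (a * b * c) • m ≠ 0 → ((a * b) • m ∈ N ∨ c • m ∈ N)

/-- A proper ideal `I` of `R` is weakly 1-absorbing prime if whenever `abc ∈ I` and
`abc ≠ 0` for nonunits `a, b, c ∈ R`, then `ab ∈ I` or `c ∈ I`. -/
def IsWeakly1AbsorbingPrimeIdeal {R : Type*} [CommRing R] (I : Ideal R) : Prop :=
  I ≠ ⊤ ∧ ∀ a b c : R, ¬ IsUnit a → ¬ IsUnit b → ¬ IsUnit c →
    a * b * c ∈ I → a * b * c ≠ 0 → (a * b ∈ I ∨ c ∈ I)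

section
variable {R : Type*} [CommRing R] {M : Type*} [AddCommGroup M] [Module R M] {N : Submodule R M}



lemma aux_single_le (K : Ideal R) (m : M) (P : Submodule R M) :
    K • Submodule.span R {m} ≤ P ↔ ∀ c ∈ K, c • m ∈ P := by
  rw [Submodule.smul_le]
  constructor
  · intro h c hc
    exact h c hc m (Submodule.mem_span_singleton_self m)
  · intro h c hc x hx
    obtain ⟨r, rfl⟩ := Submodule.mem_span_singleton.mp hx
    rw [smul_comm]
    exact P.smul_mem r (h c hc)

lemma aux_double_le (J K : Ideal R) (m : M) (P : Submodule R M) :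
    J • (K • Submodule.span R {m}) ≤ P ↔ ∀ b ∈ J, ∀ c ∈ K, (b * c) • m ∈ P := by
  rw [Submodule.smul_le]
  constructor
  · intro h b hb c hc
    rw [mul_smul]
    exact h b hb _ (Submodule.smul_mem_smul hc (Submodule.mem_span_singleton_self m))
  · intro h b hb x hx
    refine Submodule.smul_induction_on hx ?_ ?_
    · intro c hc y hy
      obtain ⟨r, rfl⟩ := Submodule.mem_span_singleton.mp hy
      have e : b • c • r • m = r • ((b * c) • m) := by
        rw [mul_smul, smul_comm c r, smul_comm b r]
      rw [e]
      exact P.smul_mem r (h b hb c hc)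
    · intro x y hx hy
      rw [smul_add]; exact P.add_mem hx hy

lemma aux_triple_le (I J K : Ideal R) (m : M) (P : Submodule R M) :
    I • (J • (K • Submodule.span R {m})) ≤ P ↔
      ∀ a ∈ I, ∀ b ∈ J, ∀ c ∈ K, (a * b * c) • m ∈ P := by
  rw [Submodule.smul_le]
  constructor
  · intro h a ha b hb c hc
    have h1 : (b * c) • m ∈ J • (K • Submodule.span R {m}) := by
      rw [mul_smul]
      exact Submodule.smul_mem_smul hb
        (Submodule.smul_mem_smul hc (Submodule.mem_span_singleton_self m))
    have := h a ha _ h1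
    rwa [← mul_smul, ← mul_assoc] at this
  · intro h a ha x hx
    have hQ : J • (K • Submodule.span R {m}) ≤ P.comap (LinearMap.lsmul R M a) := by
      rw [aux_double_le]
      intro b hb c hc
      simp only [Submodule.mem_comap, LinearMap.lsmul_apply]
      rw [← mul_smul, ← mul_assoc]
      exact h a ha b hb c hc
    exact hQ hx



lemma nonunit_of_mem {K : Ideal R} (hK : K ≠ ⊤) {c : R} (hc : c ∈ K) : ¬ IsUnit c :=
  fun h => hK (Ideal.eq_top_of_isUnit_mem K hc h)

lemma lem1 (hW : ∀ a b c : R, ∀ m : M, ¬ IsUnit a → ¬ IsUnit b → ¬ IsUnit c →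
      (a * b * c) • m ∈ N → (a * b * c) • m ≠ 0 → ((a * b) • m ∈ N ∨ c • m ∈ N))
    {a b : R} (ha : ¬ IsUnit a) (hb : ¬ IsUnit b) {K : Ideal R} (hK : K ≠ ⊤) {m : M}
    (hsub : ∀ c ∈ K, (a * b * c) • m ∈ N) {c₀ : R} (hc₀ : c₀ ∈ K)
    (hne : (a * b * c₀) • m ≠ 0) :
    (a * b) • m ∈ N ∨ ∀ c ∈ K, c • m ∈ N := by
  by_cases hab : (a * b) • m ∈ N
  · exact Or.inl hab
  right
  have hc₀m : c₀ • m ∈ N :=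
    (hW a b c₀ m ha hb (nonunit_of_mem hK hc₀) (hsub c₀ hc₀) hne).resolve_left hab
  intro c hc
  by_cases h0 : (a * b * c) • m = 0
  · have hcc : c + c₀ ∈ K := K.add_mem hc hc₀
    have e : a * b * (c + c₀) = a * b * c + a * b * c₀ := by ring
    have hm : (a * b * (c + c₀)) • m = (a * b * c₀) • m := by
      rw [e, add_smul, h0, zero_add]
    have := hW a b (c + c₀) m ha hb (nonunit_of_mem hK hcc) (by rw [hm]; exact hsub c₀ hc₀)
      (by rw [hm]; exact hne)
    rcases this with h | h
    · exact absurd h hab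
    · have e2 : c • m = (c + c₀) • m - c₀ • m := by rw [add_smul]; abel
      rw [e2]; exact N.sub_mem h hc₀m
  · exact (hW a b c m ha hb (nonunit_of_mem hK hc) (hsub c hc) h0).resolve_left hab

lemma lem2 (hW : ∀ a b c : R, ∀ m : M, ¬ IsUnit a → ¬ IsUnit b → ¬ IsUnit c →
      (a * b * c) • m ∈ N → (a * b * c) • m ≠ 0 → ((a * b) • m ∈ N ∨ c • m ∈ N))
    {a : R} (ha : ¬ IsUnit a) {J K : Ideal R} (hJ : J ≠ ⊤) (hK : K ≠ ⊤) {m : M}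
    (hsub : ∀ b ∈ J, ∀ c ∈ K, (a * b * c) • m ∈ N)
    (hne : ∃ b ∈ J, ∃ c ∈ K, (a * b * c) • m ≠ 0) :
    (∀ b ∈ J, (a * b) • m ∈ N) ∨ ∀ c ∈ K, c • m ∈ N := by
  by_cases hKm : ∀ c ∈ K, c • m ∈ N
  · exact Or.inr hKm
  left
  intro b hb
  by_cases hz : ∀ c ∈ K, (a * b * c) • m = 0
  · obtain ⟨b₀, hb₀, c₀, hc₀, h₀⟩ := hne
    have h1 : (a * b₀) • m ∈ N :=
      (lem1 hW ha (nonunit_of_mem hJ hb₀) hK (fun c hc => hsub b₀ hb₀ c hc) hc₀ h₀).resolve_right hKm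
    have hbb : b + b₀ ∈ J := J.add_mem hb hb₀
    have hsub' : ∀ c ∈ K, (a * (b + b₀) * c) • m ∈ N := by
      intro c hc
      have e : a * (b + b₀) * c = a * b * c + a * b₀ * c := by ring
      rw [e, add_smul, hz c hc, zero_add]
      exact hsub b₀ hb₀ c hc
    have hne' : (a * (b + b₀) * c₀) • m ≠ 0 := by
      have e : a * (b + b₀) * c₀ = a * b * c₀ + a * b₀ * c₀ := by ring
      rw [e, add_smul, hz c₀ hc₀, zero_add]
      exact h₀
    have h2 : (a * (b + b₀)) • m ∈ N :=
      (lem1 hW ha (nonunit_of_mem hJ hbb) hK hsub' hc₀ hne').resolve_right hKm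
    have e2 : (a * b) • m = (a * (b + b₀)) • m - (a * b₀) • m := by
      rw [mul_add, add_smul]; abel
    rw [e2]; exact N.sub_mem h2 h1
  · push_neg at hz
    obtain ⟨c₁, hc₁, h₁⟩ := hz
    exact (lem1 hW ha (nonunit_of_mem hJ hb) hK (hsub b hb) hc₁ h₁).resolve_right hKm

lemma lem3 (hW : ∀ a b c : R, ∀ m : M, ¬ IsUnit a → ¬ IsUnit b → ¬ IsUnit c →
      (a * b * c) • m ∈ N → (a * b * c) • m ≠ 0 → ((a * b) • m ∈ N ∨ c • m ∈ N))
    {I J K : Ideal R} (hI : I ≠ ⊤) (hJ : J ≠ ⊤) (hK : K ≠ ⊤) {m : M}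
    (hsub : ∀ a ∈ I, ∀ b ∈ J, ∀ c ∈ K, (a * b * c) • m ∈ N)
    (hne : ∃ a ∈ I, ∃ b ∈ J, ∃ c ∈ K, (a * b * c) • m ≠ 0) :
    (∀ a ∈ I, ∀ b ∈ J, (a * b) • m ∈ N) ∨ ∀ c ∈ K, c • m ∈ N := by
  by_cases hKm : ∀ c ∈ K, c • m ∈ N
  · exact Or.inr hKm
  left
  intro a ha
  by_cases hz : ∀ b ∈ J, ∀ c ∈ K, (a * b * c) • m = 0
  · obtain ⟨a₀, ha₀, b₀, hb₀, c₀, hc₀, h₀⟩ := hne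
    have h1 : ∀ b ∈ J, (a₀ * b) • m ∈ N :=
      (lem2 hW (nonunit_of_mem hI ha₀) hJ hK (hsub a₀ ha₀)
        ⟨b₀, hb₀, c₀, hc₀, h₀⟩).resolve_right hKm
    have haa : a + a₀ ∈ I := I.add_mem ha ha₀
    have hsub' : ∀ b ∈ J, ∀ c ∈ K, ((a + a₀) * b * c) • m ∈ N := by
      intro b hb c hc
      have e : (a + a₀) * b * c = a * b * c + a₀ * b * c := by ring
      rw [e, add_smul, hz b hb c hc, zero_add]
      exact hsub a₀ ha₀ b hb c hc
    have hne' : ((a + a₀) * b₀ * c₀) • m ≠ 0 := by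
      have e : (a + a₀) * b₀ * c₀ = a * b₀ * c₀ + a₀ * b₀ * c₀ := by ring
      rw [e, add_smul, hz b₀ hb₀ c₀ hc₀, zero_add]
      exact h₀
    have h2 : ∀ b ∈ J, ((a + a₀) * b) • m ∈ N :=
      (lem2 hW (nonunit_of_mem hI haa) hJ hK hsub'
        ⟨b₀, hb₀, c₀, hc₀, hne'⟩).resolve_right hKm
    intro b hb
    have e2 : (a * b) • m = ((a + a₀) * b) • m - (a₀ * b) • m := by
      rw [add_mul, add_smul]; abel
    rw [e2]; exact N.sub_mem (h2 b hb) (h1 b hb)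
  · push_neg at hz
    obtain ⟨b₁, hb₁, c₁, hc₁, h₁⟩ := hz
    exact (lem2 hW (nonunit_of_mem hI ha) hJ hK (hsub a ha)
      ⟨b₁, hb₁, c₁, hc₁, h₁⟩).resolve_right hKm

end

/-- A proper submodule `N` of `M` is weakly classical 1-absorbing prime iff
for all proper ideals `I, J, K` of `R` and every `m ∈ M`, `IJKm ⊆ N` and `IJKm ≠ 0`
imply `IJm ⊆ N` or `Km ⊆ N`. -/
theorem stmt_11 {R : Type*} [CommRing R] [Nontrivial R] {M : Type*} [AddCommGroup M]
    [Module R M] [Nontrivial M] (N : Submodule R M) (hN : N ≠ ⊤) :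
    IsWeaklyClassical1AbsorbingPrime N ↔
      ∀ I J K : Ideal R, I ≠ ⊤ → J ≠ ⊤ → K ≠ ⊤ → ∀ m : M,
        I • (J • (K • (Submodule.span R {m}))) ≤ N →
        I • (J • (K • (Submodule.span R {m}))) ≠ ⊥ →
        (I • (J • (Submodule.span R {m})) ≤ N ∨ K • (Submodule.span R {m}) ≤ N) := by
  constructor
  · intro hW I J K hI hJ hK m hle hne
    rw [aux_triple_le] at hle
    have hne' : ∃ a ∈ I, ∃ b ∈ J, ∃ c ∈ K, (a * b * c) • m ≠ 0 := by
      by_contra h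
      push_neg at h
      apply hne
      rw [eq_bot_iff, aux_triple_le]
      intro a ha b hb c hc
      rw [Submodule.mem_bot]
      exact h a ha b hb c hc
    rcases lem3 hW.2 hI hJ hK hle hne' with h | h
    · left
      rw [aux_double_le]
      exact h
    · right
      rw [aux_single_le]
      exact h
  · intro h
    refine ⟨hN, ?_⟩
    intro a b c m ha hb hc hmem hne0
    have hI : Ideal.span {a} ≠ ⊤ := by rwa [Ne, Ideal.span_singleton_eq_top]
    have hJ : Ideal.span {b} ≠ ⊤ := by rwa [Ne, Ideal.span_singleton_eq_top]
    have hK : Ideal.span {c} ≠ ⊤ := by rwa [Ne, Ideal.span_singleton_eq_top]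
    have hle : Ideal.span {a} • (Ideal.span {b} • (Ideal.span {c} • Submodule.span R {m})) ≤ N := by
      rw [aux_triple_le]
      intro x hx y hy z hz
      obtain ⟨r₁, rfl⟩ := Ideal.mem_span_singleton'.mp hx
      obtain ⟨r₂, rfl⟩ := Ideal.mem_span_singleton'.mp hy
      obtain ⟨r₃, rfl⟩ := Ideal.mem_span_singleton'.mp hz
      have e : r₁ * a * (r₂ * b) * (r₃ * c) = (r₁ * r₂ * r₃) * (a * b * c) := by ring
      rw [e, mul_smul]
      exact N.smul_mem _ hmem
    have hmemT : (a * b * c) • m ∈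
        Ideal.span {a} • (Ideal.span {b} • (Ideal.span {c} • Submodule.span R {m})) := by
      rw [mul_smul, mul_smul]
      exact Submodule.smul_mem_smul (Submodule.mem_span_singleton_self a)
        (Submodule.smul_mem_smul (Submodule.mem_span_singleton_self b)
          (Submodule.smul_mem_smul (Submodule.mem_span_singleton_self c)
            (Submodule.mem_span_singleton_self m)))
    have hneb : Ideal.span {a} • (Ideal.span {b} • (Ideal.span {c} • Submodule.span R {m})) ≠ ⊥ := by
      intro hbot
      exact hne0 (Submodule.mem_bot R |>.mp (hbot ▸ hmemT))
    rcases h _ _ _ hI hJ hK m hle hneb with h' | h'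
    · left
      have := (aux_double_le _ _ m N).mp h' a (Submodule.mem_span_singleton_self a)
        b (Submodule.mem_span_singleton_self b)
      exact this
    · right
      exact (aux_single_le _ m N).mp h' c (Submodule.mem_span_singleton_self c)
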